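/- arXiv:1103.5862 — 2 statements merged into one kernel-verified Lean document; each statement's English description precedes it below -/
import Mathlib

section
/- Let A be an almost Kähler–Poisson algebra. Then for all u ∈ A it holds that [D^i, D^j](u) P_{ik} P_{jl} = 0, i.e. D^i D^j(u) P_{ik} P_{jl} = D^j D^i(u) P_{ik} P_{jl}. -/
open scoped BigOperators

namespace KPA

/-- The field of fractions of the polynomial ring `ℂ[x¹,…,xᵐ]`. -/
abbrev A (m : ℕ) := FractionRing (MvPolynomial (Fin m) ℂ)

/-- The generators `x^i` of `A m`. -/
noncomputable def Xg {m : ℕ} (i : Fin m) : A m :=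
  algebraMap (MvPolynomial (Fin m) ℂ) (A m) (MvPolynomial.X i)

/-- The image of a complex constant in `A m`. -/
noncomputable def cC {m : ℕ} (z : ℂ) : A m :=
  algebraMap (MvPolynomial (Fin m) ℂ) (A m) (MvPolynomial.C z)

/-- An almost Kähler–Poisson algebra: the field of fractions `A m` of `ℂ[x¹,…,xᵐ]`,
equipped with a ∗-structure `st` fixing the generators, a Poisson bracket `br`
compatible with ∗, and an invertible hermitian element `γ2` such that
`P^i_k P^k_l P^l_j = -γ² P^i_j` where `P^{ij} = {x^i, x^j}`. -/
structure AKP (m : ℕ) where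
  br : A m → A m → A m
  st : A m → A m
  br_add_left : ∀ a b c, br (a + b) c = br a c + br b c
  br_antisymm : ∀ a b, br a b = - br b a
  br_leibniz : ∀ a b c, br a (b * c) = br a b * c + b * br a c
  br_jacobi : ∀ a b c, br a (br b c) + br b (br c a) + br c (br a b) = 0
  br_const : ∀ (z : ℂ) (a : A m), br (cC z) a = 0
  st_add : ∀ a b, st (a + b) = st a + st b
  st_mul : ∀ a b, st (a * b) = st a * st b
  st_invol : ∀ a, st (st a) = a
  st_const : ∀ z : ℂ, st (cC z) = cC (starRingEnd ℂ z)
  st_x : ∀ i, st (Xg i) = Xg i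
  st_br : ∀ a b, st (br a b) = br (st a) (st b)
  γ2 : A m
  γ2_ne : γ2 ≠ 0
  γ2_herm : st γ2 = γ2
  akp : ∀ i j, (∑ k, ∑ l, br (Xg i) (Xg k) * br (Xg k) (Xg l) * br (Xg l) (Xg j))
      = - γ2 * br (Xg i) (Xg j)

namespace AKP

variable {m : ℕ} (S : AKP m)

/-- `P^{ij} = {x^i, x^j}`. -/
noncomputable def P (i j : Fin m) : A m := S.br (Xg i) (Xg j)

/-- `D^i(u) = γ^{-2} {u, x^k} P^i_k`. -/
noncomputable def D (u : A m) (i : Fin m) : A m := S.γ2⁻¹ * ∑ k, S.br u (Xg k) * S.P i k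

/-- `D^{ik} = D^i(x^k)`. -/
noncomputable def Dm (i k : Fin m) : A m := S.D (Xg k) i

/-- Membership in the tangent space `X(A) = {D(X) : X ∈ Der(A)}` (in components). -/
def tang (T : Fin m → A m) : Prop := ∃ V : Fin m → A m, ∀ i, T i = ∑ k, S.Dm i k * V k

/-- The tangent space `X(A)` as a submodule of `A^m` : the range of the projection `D`. -/
noncomputable def tSp : Submodule (A m) (Fin m → A m) :=
  LinearMap.range (Matrix.mulVecLin (Matrix.of fun i k => S.Dm i k))

/-- Action `X(u) = X^i D_i(u)` of a tangent vector on an element. -/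
noncomputable def act (X : Fin m → A m) (u : A m) : A m := ∑ i, X i * S.D u i

/-- The covariant derivative `∇_X Y = D^{ik} X^l D_l(Y_k) ∂_i` (in components). -/
noncomputable def nab (X Y : Fin m → A m) (i : Fin m) : A m :=
  ∑ k, S.Dm i k * ∑ l, X l * S.D (Y k) l

/-- The commutator `[X,Y]^i = X(Y^i) - Y(X^i)`. -/
noncomputable def lie (X Y : Fin m → A m) (i : Fin m) : A m := S.act X (Y i) - S.act Y (X i)

/-- The curvature `R(X,Y)Z = ∇_X ∇_Y Z - ∇_Y ∇_X Z - ∇_{[X,Y]} Z`. -/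
noncomputable def curv (X Y Z : Fin m → A m) (i : Fin m) : A m :=
  S.nab X (S.nab Y Z) i - S.nab Y (S.nab X Z) i - S.nab (S.lie X Y) Z i

/-- The bilinear form `(X,Y) = X^i Y_i`. -/
noncomputable def ipa (_S : AKP m) (X Y : Fin m → A m) : A m := ∑ i, X i * Y i

/-- `R(X,Y,Z,V) = (R(Z,V)Y, X)`. -/
noncomputable def Rq (X Y Z V : Fin m → A m) : A m := S.ipa (S.curv Z V Y) X

/-- `(∇_X R)(Y,Z,V)`, the covariant derivative of the curvature tensor. -/
noncomputable def nabR (X Y Z V : Fin m → A m) (i : Fin m) : A m :=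
  S.nab X (S.curv Y Z V) i - S.curv (S.nab X Y) Z V i
    - S.curv Y (S.nab X Z) V i - S.curv Y Z (S.nab X V) i

/-- `Π^{ij} = δ^{ij} - D^{ij}`. -/
noncomputable def Pim (i j : Fin m) : A m := (if i = j then 1 else 0) - S.Dm i j

/-- The positivity preorder: `a ≥ 0` iff `a = (∑ uᵢ* uᵢ)/(∑ vₖ* vₖ)`. -/
def pos (a : A m) : Prop :=
  ∃ (N N' : ℕ) (u : Fin N → A m) (v : Fin N' → A m),
    a = (∑ i, S.st (u i) * u i) / (∑ k, S.st (v k) * v k)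

end AKP
end KPA


namespace KPA

variable {m : ℕ}

/-- A derivation on `A m` vanishing on constants and generators vanishes identically. -/
lemma der_zero (δ : A m → A m)
    (hadd : ∀ a b, δ (a + b) = δ a + δ b)
    (hmul : ∀ a b, δ (a * b) = δ a * b + a * δ b)
    (hC : ∀ z : ℂ, δ (cC z) = 0)
    (hX : ∀ i, δ (Xg i) = 0) (a : A m) : δ a = 0 := by
  have hpoly : ∀ p : MvPolynomial (Fin m) ℂ,
      δ (algebraMap (MvPolynomial (Fin m) ℂ) (A m) p) = 0 := by
    intro p
    induction p using MvPolynomial.induction_on with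
    | C z => exact hC z
    | add p q hp hq =>
        rw [RingHom.map_add, hadd, hp, hq, add_zero]
    | mul_X p n hp =>
        have hXn := hX n
        simp only [Xg] at hXn
        rw [RingHom.map_mul, hmul, hp, hXn, zero_mul, mul_zero, add_zero]
  obtain ⟨x, y, hy, rfl⟩ :=
    IsFractionRing.div_surjective (A := MvPolynomial (Fin m) ℂ) a
  have hY0 : (algebraMap (MvPolynomial (Fin m) ℂ) (A m)) y ≠ 0 :=
    IsFractionRing.to_map_ne_zero_of_mem_nonZeroDivisors hy
  have h1 : (algebraMap (MvPolynomial (Fin m) ℂ) (A m) x /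
      algebraMap (MvPolynomial (Fin m) ℂ) (A m) y) *
      algebraMap (MvPolynomial (Fin m) ℂ) (A m) y =
      algebraMap (MvPolynomial (Fin m) ℂ) (A m) x := div_mul_cancel₀ _ hY0
  have h2 := hmul (algebraMap (MvPolynomial (Fin m) ℂ) (A m) x /
      algebraMap (MvPolynomial (Fin m) ℂ) (A m) y)
      (algebraMap (MvPolynomial (Fin m) ℂ) (A m) y)
  rw [h1, hpoly x, hpoly y, mul_zero, add_zero] at h2
  rcases mul_eq_zero.mp h2.symm with h | h
  · exact h
  · exact absurd h hY0

namespace AKP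

variable (S : AKP m)

lemma br_zero_left (a : A m) : S.br 0 a = 0 := by
  have h := S.br_add_left 0 0 a
  rw [add_zero] at h
  exact (left_eq_add.mp h)

lemma br_zero_right (a : A m) : S.br a 0 = 0 := by
  rw [S.br_antisymm, br_zero_left, neg_zero]

lemma br_add_right (a b c : A m) : S.br a (b + c) = S.br a b + S.br a c := by
  rw [S.br_antisymm a (b + c), S.br_add_left, S.br_antisymm b a, S.br_antisymm c a]
  ring

lemma br_neg_right (a b : A m) : S.br a (-b) = - S.br a b := by
  have h := br_add_right S a b (-b)
  rw [add_neg_cancel, br_zero_right] at h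
  linear_combination -h

lemma br_mul_left (a b c : A m) : S.br (a * b) c = S.br a c * b + a * S.br b c := by
  rw [S.br_antisymm (a * b) c, S.br_leibniz, S.br_antisymm c a, S.br_antisymm c b]
  ring

lemma br_sum_left {ι : Type*} (s : Finset ι) (f : ι → A m) (g : A m) :
    S.br (∑ j ∈ s, f j) g = ∑ j ∈ s, S.br (f j) g := by
  classical
  induction s using Finset.induction_on with
  | empty => simpa using br_zero_left S g
  | insert a s h ih =>
      rw [Finset.sum_insert h, Finset.sum_insert h, S.br_add_left, ih]

/-- Master lemma: a bracket combination that vanishes on the generators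
vanishes identically. -/
lemma master (c : Fin m → A m) (v e : A m)
    (h0 : ∀ i, (∑ a, S.br (Xg i) (Xg a) * c a) + S.br (Xg i) v * e = 0) (g : A m) :
    (∑ a, S.br g (Xg a) * c a) + S.br g v * e = 0 := by
  refine der_zero (fun g => (∑ a, S.br g (Xg a) * c a) + S.br g v * e) ?_ ?_ ?_ h0 g
  · intro a b
    simp only [S.br_add_left, add_mul, Finset.sum_add_distrib]
    ring
  · intro a b
    simp only [br_mul_left S]
    conv_rhs => rw [add_mul, mul_add, Finset.sum_mul, Finset.mul_sum]
    have e1 : (∑ a' : Fin m, (S.br a (Xg a') * b + a * S.br b (Xg a')) * c a')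
        = ∑ a' : Fin m, (S.br a (Xg a') * c a' * b + a * (S.br b (Xg a') * c a')) :=
      Finset.sum_congr rfl fun x _ => by ring
    rw [e1, Finset.sum_add_distrib]
    ring
  · intro z
    simp [S.br_const]

/-- Key Lemma 1 : `∑_a {f,x^a} (P²)^{as} = -γ² {f,x^s}`. -/
lemma KL1 (f : A m) (s : Fin m) :
    (∑ a, S.br f (Xg a) * (∑ j, S.br (Xg a) (Xg j) * S.br (Xg j) (Xg s)))
      + S.br f (Xg s) * S.γ2 = 0 := by
  refine master S (fun a => ∑ j, S.br (Xg a) (Xg j) * S.br (Xg j) (Xg s)) (Xg s) S.γ2 ?_ f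
  intro i
  have hakp := S.akp i s
  have e1 : (∑ a, S.br (Xg i) (Xg a) * (∑ j, S.br (Xg a) (Xg j) * S.br (Xg j) (Xg s)))
      = ∑ a, ∑ j, S.br (Xg i) (Xg a) * S.br (Xg a) (Xg j) * S.br (Xg j) (Xg s) := by
    refine Finset.sum_congr rfl fun a _ => ?_
    rw [Finset.mul_sum]
    exact Finset.sum_congr rfl fun j _ => by ring
  rw [e1, hakp]
  ring

/-- Step A : `∑_i D^i(v) P^{ik} = {v, x^k}`. -/
lemma stepA (v : A m) (k : Fin m) :
    (∑ i, S.D v i * S.br (Xg i) (Xg k)) = S.br v (Xg k) := by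
  have e2 : (∑ i, S.D v i * S.br (Xg i) (Xg k))
      = ∑ a, ∑ i, S.γ2⁻¹ * (S.br v (Xg a) * (S.br (Xg i) (Xg a) * S.br (Xg i) (Xg k))) := by
    rw [Finset.sum_comm]
    refine Finset.sum_congr rfl fun i _ => ?_
    simp only [AKP.D, AKP.P]
    rw [Finset.mul_sum, Finset.sum_mul]
    exact Finset.sum_congr rfl fun a _ => by ring
  have e5 : (∑ a, ∑ i, S.γ2⁻¹ * (S.br v (Xg a) * (S.br (Xg i) (Xg a) * S.br (Xg i) (Xg k))))
      = S.γ2⁻¹ * ∑ a, S.br v (Xg a) * (∑ i, S.br (Xg i) (Xg a) * S.br (Xg i) (Xg k)) := by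
    rw [Finset.mul_sum]
    refine Finset.sum_congr rfl fun a _ => ?_
    rw [Finset.mul_sum, Finset.mul_sum]
  have e3 : ∀ a : Fin m, (∑ i, S.br (Xg i) (Xg a) * S.br (Xg i) (Xg k))
      = - ∑ i, S.br (Xg a) (Xg i) * S.br (Xg i) (Xg k) := by
    intro a
    rw [← Finset.sum_neg_distrib]
    refine Finset.sum_congr rfl fun i _ => ?_
    rw [S.br_antisymm (Xg i) (Xg a)]
    ring
  have e6 : (∑ a, S.br v (Xg a) * (∑ i, S.br (Xg i) (Xg a) * S.br (Xg i) (Xg k)))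
      = S.br v (Xg k) * S.γ2 := by
    have e7 : (∑ a, S.br v (Xg a) * (∑ i, S.br (Xg i) (Xg a) * S.br (Xg i) (Xg k)))
        = - ∑ a, S.br v (Xg a) * (∑ i, S.br (Xg a) (Xg i) * S.br (Xg i) (Xg k)) := by
      rw [← Finset.sum_neg_distrib]
      refine Finset.sum_congr rfl fun a _ => ?_
      rw [e3 a]
      ring
    have hKL := KL1 S v k
    rw [e7]
    linear_combination - hKL
  rw [e2, e5, e6]
  have hne := S.γ2_ne
  field_simp

/-- Key Lemma 2 : `∑_j D^j(u) {f,x^j} = -{u,f}`. -/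
lemma KL2 (u f : A m) :
    (∑ a, S.D u a * S.br f (Xg a)) = - S.br u f := by
  have h0 : ∀ i, (∑ a, S.br (Xg i) (Xg a) * S.D u a) + S.br (Xg i) u * (-1 : A m) = 0 := by
    intro i
    have hA := stepA S u i
    have e : (∑ a, S.br (Xg i) (Xg a) * S.D u a)
        = - ∑ a, S.D u a * S.br (Xg a) (Xg i) := by
      rw [← Finset.sum_neg_distrib]
      refine Finset.sum_congr rfl fun a _ => ?_
      rw [S.br_antisymm (Xg i) (Xg a)]
      ring
    rw [e, hA]
    have ha := S.br_antisymm (Xg i) u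
    linear_combination -ha
  have h := master S (fun a => S.D u a) u (-1 : A m) h0 f
  have e : (∑ a, S.D u a * S.br f (Xg a)) = ∑ a, S.br f (Xg a) * S.D u a :=
    Finset.sum_congr rfl fun a _ => mul_comm _ _
  have ha := S.br_antisymm u f
  rw [e]
  linear_combination h + ha

end AKP
end KPA

/-- In an almost Kähler–Poisson algebra it holds for all `u ∈ A` that
`[D^i, D^j](u) P_{ik} P_{jl} = 0`. -/
theorem statement_12 {m : ℕ} (S : KPA.AKP m) (u : KPA.A m) (k l : Fin m) :
    ∑ i, ∑ j, (S.D (S.D u j) i - S.D (S.D u i) j) * S.P i k * S.P j l = 0 := by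
  classical
  simp only [KPA.AKP.P]
  have hsplit : (∑ i, ∑ j, (S.D (S.D u j) i - S.D (S.D u i) j) *
        S.br (KPA.Xg i) (KPA.Xg k) * S.br (KPA.Xg j) (KPA.Xg l))
      = (∑ i, ∑ j, S.D (S.D u j) i * S.br (KPA.Xg i) (KPA.Xg k) * S.br (KPA.Xg j) (KPA.Xg l))
        - (∑ i, ∑ j, S.D (S.D u i) j * S.br (KPA.Xg i) (KPA.Xg k) * S.br (KPA.Xg j) (KPA.Xg l)) := by
    rw [← Finset.sum_sub_distrib]
    refine Finset.sum_congr rfl fun i _ => ?_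
    rw [← Finset.sum_sub_distrib]
    exact Finset.sum_congr rfl fun j _ => by ring
  have hT1 : (∑ i, ∑ j, S.D (S.D u j) i * S.br (KPA.Xg i) (KPA.Xg k) * S.br (KPA.Xg j) (KPA.Xg l))
      = ∑ j, S.br (S.D u j) (KPA.Xg k) * S.br (KPA.Xg j) (KPA.Xg l) := by
    rw [Finset.sum_comm]
    refine Finset.sum_congr rfl fun j _ => ?_
    rw [← KPA.AKP.stepA S (S.D u j) k, Finset.sum_mul]
  have hT2 : (∑ i, ∑ j, S.D (S.D u i) j * S.br (KPA.Xg i) (KPA.Xg k) * S.br (KPA.Xg j) (KPA.Xg l))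
      = ∑ i, S.br (S.D u i) (KPA.Xg l) * S.br (KPA.Xg i) (KPA.Xg k) := by
    refine Finset.sum_congr rfl fun i _ => ?_
    rw [← KPA.AKP.stepA S (S.D u i) l, Finset.sum_mul]
    exact Finset.sum_congr rfl fun j _ => by ring
  have hL1 : (∑ j, S.br (S.D u j) (KPA.Xg k) * S.br (KPA.Xg j) (KPA.Xg l))
      = S.br (S.br u (KPA.Xg l)) (KPA.Xg k)
        - ∑ j, S.D u j * S.br (S.br (KPA.Xg j) (KPA.Xg l)) (KPA.Xg k) := by
    have e : S.br (S.br u (KPA.Xg l)) (KPA.Xg k)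
        = ∑ j, (S.br (S.D u j) (KPA.Xg k) * S.br (KPA.Xg j) (KPA.Xg l)
            + S.D u j * S.br (S.br (KPA.Xg j) (KPA.Xg l)) (KPA.Xg k)) := by
      rw [← KPA.AKP.stepA S u l, KPA.AKP.br_sum_left S]
      exact Finset.sum_congr rfl fun j _ => KPA.AKP.br_mul_left S _ _ _
    rw [e, Finset.sum_add_distrib]
    ring
  have hL2 : (∑ i, S.br (S.D u i) (KPA.Xg l) * S.br (KPA.Xg i) (KPA.Xg k))
      = S.br (S.br u (KPA.Xg k)) (KPA.Xg l)
        - ∑ i, S.D u i * S.br (S.br (KPA.Xg i) (KPA.Xg k)) (KPA.Xg l) := by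
    have e : S.br (S.br u (KPA.Xg k)) (KPA.Xg l)
        = ∑ i, (S.br (S.D u i) (KPA.Xg l) * S.br (KPA.Xg i) (KPA.Xg k)
            + S.D u i * S.br (S.br (KPA.Xg i) (KPA.Xg k)) (KPA.Xg l)) := by
      rw [← KPA.AKP.stepA S u k, KPA.AKP.br_sum_left S]
      exact Finset.sum_congr rfl fun i _ => KPA.AKP.br_mul_left S _ _ _
    rw [e, Finset.sum_add_distrib]
    ring
  have hJ1 : S.br (S.br u (KPA.Xg l)) (KPA.Xg k) - S.br (S.br u (KPA.Xg k)) (KPA.Xg l)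
      = S.br u (S.br (KPA.Xg l) (KPA.Xg k)) := by
    have j := S.br_jacobi u (KPA.Xg l) (KPA.Xg k)
    have a1 := S.br_antisymm (S.br u (KPA.Xg l)) (KPA.Xg k)
    have a2 := S.br_antisymm (S.br u (KPA.Xg k)) (KPA.Xg l)
    have a3 : S.br (KPA.Xg l) (S.br (KPA.Xg k) u) = - S.br (KPA.Xg l) (S.br u (KPA.Xg k)) := by
      rw [S.br_antisymm (KPA.Xg k) u, KPA.AKP.br_neg_right]
    linear_combination a1 - a2 - j + a3
  have hJ2 : ∀ j : Fin m,
      S.br (S.br (KPA.Xg j) (KPA.Xg l)) (KPA.Xg k)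
        - S.br (S.br (KPA.Xg j) (KPA.Xg k)) (KPA.Xg l)
      = - S.br (S.br (KPA.Xg l) (KPA.Xg k)) (KPA.Xg j) := by
    intro j
    have jj := S.br_jacobi (KPA.Xg j) (KPA.Xg l) (KPA.Xg k)
    have a1 := S.br_antisymm (S.br (KPA.Xg j) (KPA.Xg l)) (KPA.Xg k)
    have a2 := S.br_antisymm (S.br (KPA.Xg j) (KPA.Xg k)) (KPA.Xg l)
    have a3 := S.br_antisymm (S.br (KPA.Xg l) (KPA.Xg k)) (KPA.Xg j)
    have a4 : S.br (KPA.Xg l) (S.br (KPA.Xg k) (KPA.Xg j))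
        = - S.br (KPA.Xg l) (S.br (KPA.Xg j) (KPA.Xg k)) := by
      rw [S.br_antisymm (KPA.Xg k) (KPA.Xg j), KPA.AKP.br_neg_right]
    linear_combination a1 - a2 + a3 - jj + a4
  have hK := KPA.AKP.KL2 S u (S.br (KPA.Xg l) (KPA.Xg k))
  have hsum : (∑ j, S.D u j * S.br (S.br (KPA.Xg j) (KPA.Xg l)) (KPA.Xg k))
        - (∑ j, S.D u j * S.br (S.br (KPA.Xg j) (KPA.Xg k)) (KPA.Xg l))
      = - ∑ j, S.D u j * S.br (S.br (KPA.Xg l) (KPA.Xg k)) (KPA.Xg j) := by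
    rw [← Finset.sum_sub_distrib, ← Finset.sum_neg_distrib]
    refine Finset.sum_congr rfl fun j _ => ?_
    have := hJ2 j
    linear_combination S.D u j * this
  rw [hsplit, hT1, hT2, hL1, hL2]
  linear_combination hJ1 - hsum + hK
end

section
/- Let A be an almost Kähler–Poisson algebra of geometric dimension n, and let T^{ij} be a tangential tensor (i.e. T^{ij} D_j^k = T^{ik} and D^i_j T^{jk} = T^{ik}). Then the Cauchy–Schwarz-type inequality (Tr D)² (T^{ij})* T_{ij} ≥ (Tr D)(Tr T)*(Tr T) holds with respect to the positivity preorder on A; equivalently, since Tr D = n, (T^{ij})* T_{ij} ≥ (1/n)(Tr T)*(Tr T), where Tr T = T^i_i. -/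
open scoped BigOperators

set_option maxHeartbeats 1000000
set_option synthInstance.maxHeartbeats 1000000

namespace KPA
namespace AKP

variable {m : ℕ} (S : AKP m)

lemma st_zero' : S.st 0 = 0 := by
  have h := S.st_add 0 0
  rw [add_zero] at h
  nth_rewrite 1 [← add_zero (S.st 0)] at h
  exact (add_left_cancel h).symm

lemma st_one' : S.st 1 = 1 := by
  have h1 : (cC 1 : A m) = 1 := by simp [cC]
  have h := S.st_const 1
  rw [h1] at h
  simpa [h1] using h

/-- `st` as a ring homomorphism. -/
noncomputable def stR : A m →+* A m where
  toFun := S.st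
  map_one' := S.st_one'
  map_mul' := S.st_mul
  map_zero' := S.st_zero'
  map_add' := S.st_add

@[simp] lemma stR_apply (a : A m) : S.stR a = S.st a := rfl

lemma st_sum' {ι : Type*} (s : Finset ι) (f : ι → A m) :
    S.st (∑ i ∈ s, f i) = ∑ i ∈ s, S.st (f i) := map_sum S.stR f s

lemma st_sub' (a b : A m) : S.st (a - b) = S.st a - S.st b := map_sub S.stR a b

lemma st_γ2inv : S.st S.γ2⁻¹ = S.γ2⁻¹ := by
  have h : S.stR S.γ2⁻¹ = (S.stR S.γ2)⁻¹ := map_inv₀ S.stR S.γ2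
  simp only [stR_apply] at h
  rw [S.γ2_herm] at h
  exact h

lemma st_P (i j : Fin m) : S.st (S.P i j) = S.P i j := by
  unfold P; rw [S.st_br, S.st_x, S.st_x]

lemma P_anti (i j : Fin m) : S.P i j = - S.P j i := S.br_antisymm _ _

lemma Dm_eq (i k : Fin m) : S.Dm i k = S.γ2⁻¹ * ∑ j, S.P k j * S.P i j := rfl

lemma Dm_symm (i k : Fin m) : S.Dm i k = S.Dm k i := by
  rw [Dm_eq, Dm_eq]
  congr 1
  exact Finset.sum_congr rfl fun j _ => mul_comm _ _

lemma st_Dm (i k : Fin m) : S.st (S.Dm i k) = S.Dm i k := by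
  rw [Dm_eq, S.st_mul, S.st_γ2inv, S.st_sum']
  congr 1
  refine Finset.sum_congr rfl fun j _ => ?_
  rw [S.st_mul, S.st_P, S.st_P]

lemma Dm_idem (i k : Fin m) : ∑ j, S.Dm i j * S.Dm j k = S.Dm i k := by
  have hP3 : ∀ a b : Fin m,
      (∑ j, ∑ c, S.P a j * S.P j c * S.P c b) = - S.γ2 * S.P a b := S.akp
  have hγ : S.γ2⁻¹ * S.γ2 = 1 := inv_mul_cancel₀ S.γ2_ne
  have key : ∀ j, S.Dm i j * S.Dm j k
      = ∑ a, ∑ b, S.γ2⁻¹ * S.γ2⁻¹ * (S.P i a * (S.P a j * S.P j b * S.P b k)) := by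
    intro j
    rw [Dm_eq, Dm_eq, Finset.mul_sum, Finset.mul_sum, Finset.sum_mul_sum]
    refine Finset.sum_congr rfl fun a _ => Finset.sum_congr rfl fun b _ => ?_
    rw [S.P_anti j a, S.P_anti k b]
    ring
  calc ∑ j, S.Dm i j * S.Dm j k
      = ∑ j, ∑ a, ∑ b, S.γ2⁻¹ * S.γ2⁻¹ * (S.P i a * (S.P a j * S.P j b * S.P b k)) :=
        Finset.sum_congr rfl fun j _ => key j
    _ = ∑ a, ∑ j, ∑ b, S.γ2⁻¹ * S.γ2⁻¹ * (S.P i a * (S.P a j * S.P j b * S.P b k)) :=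
        Finset.sum_comm
    _ = ∑ a, S.γ2⁻¹ * S.γ2⁻¹ * (S.P i a * ∑ j, ∑ b, S.P a j * S.P j b * S.P b k) := by
        refine Finset.sum_congr rfl fun a _ => ?_
        simp only [Finset.mul_sum]
    _ = ∑ a, S.γ2⁻¹ * S.γ2⁻¹ * (S.P i a * (- S.γ2 * S.P a k)) := by
        refine Finset.sum_congr rfl fun a _ => ?_
        rw [hP3 a k]
    _ = S.Dm i k := by
        rw [Dm_eq, Finset.mul_sum]
        refine Finset.sum_congr rfl fun a _ => ?_
        rw [S.P_anti k a]
        calc S.γ2⁻¹ * S.γ2⁻¹ * (S.P i a * (- S.γ2 * S.P a k))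
            = S.γ2⁻¹ * S.γ2 * (S.γ2⁻¹ * (- S.P a k * S.P i a)) := by ring
          _ = S.γ2⁻¹ * (- S.P a k * S.P i a) := by rw [hγ, one_mul]

/-- Helper: positivity from a representation indexed by arbitrary fintypes. -/
lemma pos_of_eq {ι κ : Type*} [Fintype ι] [Fintype κ] (u : ι → A m) (v : κ → A m)
    {a : A m} (h : a = (∑ i, S.st (u i) * u i) / (∑ k, S.st (v k) * v k)) : S.pos a := by
  refine ⟨Fintype.card ι, Fintype.card κ,
    u ∘ (Fintype.equivFin ι).symm, v ∘ (Fintype.equivFin κ).symm, ?_⟩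
  rw [h]
  congr 1
  · exact (Equiv.sum_comp (Fintype.equivFin ι).symm fun i => S.st (u i) * u i).symm
  · exact (Equiv.sum_comp (Fintype.equivFin κ).symm fun k => S.st (v k) * v k).symm

lemma pos_zero : S.pos 0 := by
  refine ⟨1, 1, fun _ => 0, fun _ => 0, ?_⟩
  simp [S.st_zero']

end AKP
end KPA

namespace KPA
namespace AKP

/-- The Cauchy–Schwarz "difference vector" `c_{xy} = D_x T_y - D_y T_x`. -/
noncomputable def cs {m : ℕ} (S : AKP m) (T : Fin m → Fin m → A m)
    (z : (Fin m × Fin m) × (Fin m × Fin m)) : A m :=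
  S.Dm z.1.1 z.1.2 * T z.2.1 z.2.2 - S.Dm z.2.1 z.2.2 * T z.1.1 z.1.2

end AKP
end KPA

/-- The Cauchy–Schwarz-type inequality for a tangential tensor `T^{ij}`
in an almost Kähler–Poisson algebra of geometric dimension `n`:
`(Tr D)² (T^{ij})* T_{ij} ≥ (Tr D)(Tr T)*(Tr T)`, and equivalently, since `Tr D = n`,
`(T^{ij})* T_{ij} ≥ (1/n)(Tr T)*(Tr T)`, with respect to the positivity preorder. -/
theorem statement_19 {m n : ℕ} (S : KPA.AKP m) (T : Fin m → Fin m → KPA.A m)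
    (hT1 : ∀ i k, ∑ j, T i j * S.Dm j k = T i k)
    (hT2 : ∀ i k, ∑ j, S.Dm i j * T j k = T i k)
    (hn : n = Module.finrank (KPA.A m) S.tSp)
    (hTrD : ∑ i, S.Dm i i = (n : KPA.A m)) :
    S.pos ((∑ i, S.Dm i i) ^ 2 * (∑ i, ∑ j, S.st (T i j) * T i j)
        - (∑ i, S.Dm i i) * (S.st (∑ i, T i i) * ∑ i, T i i)) ∧
    S.pos ((∑ i, ∑ j, S.st (T i j) * T i j)
        - ((n : KPA.A m))⁻¹ * (S.st (∑ i, T i i) * ∑ i, T i i)) := by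
  classical
  -- key sums
  have hsD : ∑ x : Fin m × Fin m, S.Dm x.1 x.2 * S.Dm x.1 x.2 = (n : KPA.A m) := by
    rw [Fintype.sum_prod_type]
    calc ∑ i, ∑ j, S.Dm i j * S.Dm i j
        = ∑ i, ∑ j, S.Dm i j * S.Dm j i := by
          refine Finset.sum_congr rfl fun i _ => Finset.sum_congr rfl fun j _ => ?_
          nth_rewrite 2 [S.Dm_symm i j]
          rfl
      _ = ∑ i, S.Dm i i := Finset.sum_congr rfl fun i _ => S.Dm_idem i i
      _ = (n : KPA.A m) := hTrD
  have hpD : ∑ x : Fin m × Fin m, S.Dm x.1 x.2 * T x.1 x.2 = ∑ i, T i i := by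
    rw [Fintype.sum_prod_type]
    calc ∑ i, ∑ j, S.Dm i j * T i j
        = ∑ i, ∑ j, S.Dm j i * T i j := by
          refine Finset.sum_congr rfl fun i _ => Finset.sum_congr rfl fun j _ => ?_
          rw [S.Dm_symm i j]
      _ = ∑ j, ∑ i, S.Dm j i * T i j := Finset.sum_comm
      _ = ∑ j, T j j := Finset.sum_congr rfl fun j _ => hT2 j j
  have hpS : ∑ x : Fin m × Fin m, S.Dm x.1 x.2 * S.st (T x.1 x.2) = S.st (∑ i, T i i) := by
    rw [← hpD, S.st_sum']
    refine Finset.sum_congr rfl fun x _ => ?_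
    rw [S.st_mul, S.st_Dm]
  have hqv : ∑ x : Fin m × Fin m, S.st (T x.1 x.2) * T x.1 x.2
      = ∑ i, ∑ j, S.st (T i j) * T i j := Fintype.sum_prod_type _
  -- the Lagrange identity
  have lag : ∑ z : (Fin m × Fin m) × (Fin m × Fin m), S.st (S.cs T z) * S.cs T z
      = 2 * ((n : KPA.A m) * (∑ i, ∑ j, S.st (T i j) * T i j))
        - 2 * (S.st (∑ i, T i i) * (∑ i, T i i)) := by
    have hterm : ∀ x y : Fin m × Fin m, S.st (S.cs T (x, y)) * S.cs T (x, y) =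
        (S.Dm x.1 x.2 * S.Dm x.1 x.2) * (S.st (T y.1 y.2) * T y.1 y.2)
        + (S.Dm y.1 y.2 * S.Dm y.1 y.2) * (S.st (T x.1 x.2) * T x.1 x.2)
        - (S.Dm x.1 x.2 * T x.1 x.2) * (S.Dm y.1 y.2 * S.st (T y.1 y.2))
        - (S.Dm x.1 x.2 * S.st (T x.1 x.2)) * (S.Dm y.1 y.2 * T y.1 y.2) := by
      intro x y
      have hc : S.st (S.cs T (x, y))
          = S.Dm x.1 x.2 * S.st (T y.1 y.2) - S.Dm y.1 y.2 * S.st (T x.1 x.2) := by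
        show S.st (S.Dm x.1 x.2 * T y.1 y.2 - S.Dm y.1 y.2 * T x.1 x.2) = _
        rw [S.st_sub', S.st_mul, S.st_mul, S.st_Dm, S.st_Dm]
      rw [hc]
      show _ * (S.Dm x.1 x.2 * T y.1 y.2 - S.Dm y.1 y.2 * T x.1 x.2) = _
      ring
    rw [Fintype.sum_prod_type]
    simp only [hterm]
    simp only [Finset.sum_add_distrib, Finset.sum_sub_distrib, ← Finset.sum_mul,
      ← Finset.mul_sum]
    rw [hsD, hpD, hpS, hqv]
    ring
  constructor
  · refine S.pos_of_eq (ι := Fin n × ((Fin m × Fin m) × (Fin m × Fin m))) (κ := Fin 2)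
      (fun z => S.cs T z.2) (fun _ => 1) ?_
    have hden : (∑ _k : Fin 2, S.st (1 : KPA.A m) * 1) = 2 := by simp [S.st_one']
    have hnum : (∑ z : Fin n × ((Fin m × Fin m) × (Fin m × Fin m)),
          S.st (S.cs T z.2) * S.cs T z.2)
        = (n : KPA.A m) * (∑ z, S.st (S.cs T z) * S.cs T z) := by
      rw [Fintype.sum_prod_type]
      simp [Finset.sum_const, nsmul_eq_mul]
    rw [hden, hnum, lag, hTrD, eq_div_iff (two_ne_zero)]
    ring
  · by_cases hn0 : n = 0
    · have hbot : S.tSp = ⊥ := Submodule.finrank_eq_zero.mp (hn0 ▸ hn).symm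
      have hD0 : ∀ i j, S.Dm i j = 0 := by
        intro i j
        have hmem : (Matrix.mulVecLin (Matrix.of fun i k => S.Dm i k)) (Pi.single j 1)
            ∈ S.tSp := LinearMap.mem_range_self _ _
        rw [hbot, Submodule.mem_bot] at hmem
        have h := congrFun hmem i
        simpa [Matrix.mulVecLin, Matrix.mulVec, dotProduct, Pi.single_apply,
          mul_ite, Finset.sum_ite_eq'] using h
      have hT0 : ∀ i j, T i j = 0 := fun i j => by
        rw [← hT2 i j]
        exact Finset.sum_eq_zero fun k _ => by rw [hD0 i k, zero_mul]
      have hz : ((∑ i, ∑ j, S.st (T i j) * T i j)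
          - ((n : KPA.A m))⁻¹ * (S.st (∑ i, T i i) * ∑ i, T i i)) = 0 := by
        simp [hT0, S.st_zero']
      rw [hz]; exact S.pos_zero
    · refine S.pos_of_eq (ι := (Fin m × Fin m) × (Fin m × Fin m)) (κ := Fin (2 * n))
        (S.cs T) (fun _ => 1) ?_
      have hden : (∑ _k : Fin (2 * n), S.st (1 : KPA.A m) * 1) = ((2 * n : ℕ) : KPA.A m) := by
        simp [S.st_one']
      have hnA : ((n : ℕ) : KPA.A m) ≠ 0 := Nat.cast_ne_zero.mpr hn0
      have hne : ((2 * n : ℕ) : KPA.A m) ≠ 0 := by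
        push_cast
        exact mul_ne_zero two_ne_zero hnA
      rw [hden, lag, eq_div_iff hne]
      push_cast
      field_simp
end
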